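/- On ℝ⁸ with coordinates (x₁, …, x₈), consider the eight vector fields giving the adjoint representation of sl(3,ℝ) (written as component lists with respect to ∂/∂x₁, …, ∂/∂x₈): X₁ = (0, x₂, 2x₃, −x₄, 0, x₆, −2x₇, −x₈), X₂ = (x₄, x₅−x₁, x₆, 0, −x₄, 0, 0, −x₇), X₃ = (x₇, x₈, −x₅−2x₁, 0, 0, −x₄, 0, 0), X₄ = (−x₂, 0, 0, −x₅+x₁, x₂, x₃, −x₈, 0), X₅ = (0, −x₂, x₃, x₄, 0, 2x₆, −x₇, −2x₈), X₆ = (0, 0, −x₂, x₇, x₈, −2x₅−x₁, 0, 0), X₇ = (−x₃, 0, 0, −x₆, 0, 0, x₅+2x₁, x₂), X₈ = (0, −x₃, 0, 0, −x₆, 0, x₄, 2x₅+x₁). Then the polynomial I₁ = x₅² + x₁x₅ + x₁² + x₇x₃ + x₈x₆ + x₄x₂ is a joint invariant: X_k I₁ = 0 on ℝ⁸ for every k = 1, …, 8. -/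

import Mathlib

/-- The action of a vector field `X` on a smooth function `f`:
`(X f)(q) = Df(q)(X(q))`. -/
noncomputable def vAct {n : ℕ} (X : (Fin n → ℝ) → (Fin n → ℝ))
    (f : (Fin n → ℝ) → ℝ) : (Fin n → ℝ) → ℝ :=
  fun q => fderiv ℝ f q (X q)

/-- The eight fundamental vector fields of the adjoint representation of
`sl(3, ℝ)` on `ℝ⁸` (0-indexed coordinates `x 0, …, x 7` for `x₁, …, x₈`). -/
noncomputable def sl3AdX : Fin 8 → (Fin 8 → ℝ) → (Fin 8 → ℝ) :=
  ![fun x => ![0, x 1, 2 * x 2, -x 3, 0, x 5, -2 * x 6, -x 7],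
    fun x => ![x 3, x 4 - x 0, x 5, 0, -x 3, 0, 0, -x 6],
    fun x => ![x 6, x 7, -x 4 - 2 * x 0, 0, 0, -x 3, 0, 0],
    fun x => ![-x 1, 0, 0, -x 4 + x 0, x 1, x 2, -x 7, 0],
    fun x => ![0, -x 1, x 2, x 3, 0, 2 * x 5, -x 6, -2 * x 7],
    fun x => ![0, 0, -x 1, x 6, x 7, -2 * x 4 - x 0, 0, 0],
    fun x => ![-x 2, 0, 0, -x 5, 0, 0, x 4 + 2 * x 0, x 1],
    fun x => ![0, -x 2, 0, 0, -x 5, 0, x 3, 2 * x 4 + x 0]]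

private lemma ev8_0 {α : Type*} (a0 a1 a2 a3 a4 a5 a6 a7 : α) :
    ![a0, a1, a2, a3, a4, a5, a6, a7] (0 : Fin 8) = a0 := rfl

private lemma ev8m_0 {α : Type*} (a0 a1 a2 a3 a4 a5 a6 a7 : α) (h : 0 < 8) :
    ![a0, a1, a2, a3, a4, a5, a6, a7] ⟨0, h⟩ = a0 := rfl

private lemma ev8_1 {α : Type*} (a0 a1 a2 a3 a4 a5 a6 a7 : α) :
    ![a0, a1, a2, a3, a4, a5, a6, a7] (1 : Fin 8) = a1 := rfl

private lemma ev8m_1 {α : Type*} (a0 a1 a2 a3 a4 a5 a6 a7 : α) (h : 1 < 8) :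
    ![a0, a1, a2, a3, a4, a5, a6, a7] ⟨1, h⟩ = a1 := rfl

private lemma ev8_2 {α : Type*} (a0 a1 a2 a3 a4 a5 a6 a7 : α) :
    ![a0, a1, a2, a3, a4, a5, a6, a7] (2 : Fin 8) = a2 := rfl

private lemma ev8m_2 {α : Type*} (a0 a1 a2 a3 a4 a5 a6 a7 : α) (h : 2 < 8) :
    ![a0, a1, a2, a3, a4, a5, a6, a7] ⟨2, h⟩ = a2 := rfl

private lemma ev8_3 {α : Type*} (a0 a1 a2 a3 a4 a5 a6 a7 : α) :
    ![a0, a1, a2, a3, a4, a5, a6, a7] (3 : Fin 8) = a3 := rfl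

private lemma ev8m_3 {α : Type*} (a0 a1 a2 a3 a4 a5 a6 a7 : α) (h : 3 < 8) :
    ![a0, a1, a2, a3, a4, a5, a6, a7] ⟨3, h⟩ = a3 := rfl

private lemma ev8_4 {α : Type*} (a0 a1 a2 a3 a4 a5 a6 a7 : α) :
    ![a0, a1, a2, a3, a4, a5, a6, a7] (4 : Fin 8) = a4 := rfl

private lemma ev8m_4 {α : Type*} (a0 a1 a2 a3 a4 a5 a6 a7 : α) (h : 4 < 8) :
    ![a0, a1, a2, a3, a4, a5, a6, a7] ⟨4, h⟩ = a4 := rfl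

private lemma ev8_5 {α : Type*} (a0 a1 a2 a3 a4 a5 a6 a7 : α) :
    ![a0, a1, a2, a3, a4, a5, a6, a7] (5 : Fin 8) = a5 := rfl

private lemma ev8m_5 {α : Type*} (a0 a1 a2 a3 a4 a5 a6 a7 : α) (h : 5 < 8) :
    ![a0, a1, a2, a3, a4, a5, a6, a7] ⟨5, h⟩ = a5 := rfl

private lemma ev8_6 {α : Type*} (a0 a1 a2 a3 a4 a5 a6 a7 : α) :
    ![a0, a1, a2, a3, a4, a5, a6, a7] (6 : Fin 8) = a6 := rfl

private lemma ev8m_6 {α : Type*} (a0 a1 a2 a3 a4 a5 a6 a7 : α) (h : 6 < 8) :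
    ![a0, a1, a2, a3, a4, a5, a6, a7] ⟨6, h⟩ = a6 := rfl

private lemma ev8_7 {α : Type*} (a0 a1 a2 a3 a4 a5 a6 a7 : α) :
    ![a0, a1, a2, a3, a4, a5, a6, a7] (7 : Fin 8) = a7 := rfl

private lemma ev8m_7 {α : Type*} (a0 a1 a2 a3 a4 a5 a6 a7 : α) (h : 7 < 8) :
    ![a0, a1, a2, a3, a4, a5, a6, a7] ⟨7, h⟩ = a7 := rfl

set_option maxHeartbeats 1000000 in
/-- The quadratic polynomial `I₁ = x₅² + x₁x₅ + x₁² + x₇x₃ + x₈x₆ + x₄x₂` is a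
joint invariant of the adjoint representation of `sl(3, ℝ)`. -/
theorem sl3_adjoint_invariant_I1 :
    ∀ k : Fin 8, ∀ x : Fin 8 → ℝ,
      vAct (sl3AdX k)
        (fun x => x 4 ^ 2 + x 0 * x 4 + x 0 ^ 2 + x 6 * x 2 +
          x 7 * x 5 + x 3 * x 1) x = 0 := by
  intro k x
  have hp : ∀ i : Fin 8, HasFDerivAt (𝕜 := ℝ) (fun x : Fin 8 → ℝ => x i)
      (ContinuousLinearMap.proj i) x :=
    fun i => hasFDerivAt_apply i x
  have h := ((((((hp 4).mul (hp 4)).add ((hp 0).mul (hp 4))).add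
      ((hp 0).mul (hp 0))).add ((hp 6).mul (hp 2))).add
      ((hp 7).mul (hp 5))).add ((hp 3).mul (hp 1))
  have hf : (fun x : Fin 8 → ℝ => x 4 ^ 2 + x 0 * x 4 + x 0 ^ 2 + x 6 * x 2 +
      x 7 * x 5 + x 3 * x 1) = (fun x : Fin 8 → ℝ => x 4 * x 4 + x 0 * x 4 +
      x 0 * x 0 + x 6 * x 2 + x 7 * x 5 + x 3 * x 1) := by
    funext y; ring
  simp only [vAct, hf]
  rw [HasFDerivAt.fderiv (f := fun x : Fin 8 → ℝ => x 4 * x 4 + x 0 * x 4 + x 0 * x 0 + x 6 * x 2 + x 7 * x 5 + x 3 * x 1) h]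
  simp only [ContinuousLinearMap.add_apply, ContinuousLinearMap.smul_apply,
    ContinuousLinearMap.proj_apply, smul_eq_mul]
  fin_cases k <;>
    simp only [sl3AdX, ev8_0, ev8m_0, ev8_1, ev8m_1, ev8_2, ev8m_2, ev8_3, ev8m_3, ev8_4, ev8m_4, ev8_5, ev8m_5, ev8_6, ev8m_6, ev8_7, ev8m_7] <;>
    ring
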